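/- Let (Ω, F, P) be a probability space, let p ≥ q₁ + 2 with q₁ ≥ 1, and let M be a real symmetric positive semidefinite p×p matrix with exactly q₁ nonzero eigenvalues. Let (C_n) be a sequence of nonnegative reals with C_n ≤ K₀·n^{−1/2} for some constant K₀, and for each n let M_n : Ω → (real symmetric p×p matrices) be measurable with ‖M_n − M‖_F = O_p(max{C_n, n^{−1/2}}), i.e. for every ε > 0 there exists C > 0 such that P(‖M_n − M‖_F > C·max{C_n, n^{−1/2}}) ≤ ε for all n. Let λ̂_j(n) = λ_j(M_n), let c₁(n), c₂(n) > 0 with c₁(n) → 0, c₂(n) → 0 and n·c₁(n)·c₂(n) → ∞, and fix τ ∈ (0, 1). Define ŝ_j(n) = λ̂_j(n)/(1 + λ̂_j(n)), ŝ*_j(n) = (ŝ_j(n)² + c₁(n))/(ŝ_{j+1}(n)² + c₁(n)) − 1, r_j(n) = (ŝ*_{j+1}(n) + c₂(n))/(ŝ*_j(n) + c₂(n)), and S_n = {j ∈ {1, ..., p − 2} : r_j(n) ≤ τ}. Then P(S_n is nonempty and max S_n = q₁) → 1 as n → ∞. -/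

import Mathlib

open Filter MeasureTheory
open scoped Classical ENNReal

/-- The `i`-th largest eigenvalue (1-based, counted with multiplicity) of a real
symmetric `k × k` matrix; junk value `0` if `A` is not symmetric or `i` is out of range. -/
noncomputable def eigDesc {k : ℕ} (A : Matrix (Fin k) (Fin k) ℝ) (i : ℕ) : ℝ :=
  if h : A.IsHermitian ∧ i - 1 < k then
    h.1.eigenvalues (Tuple.sort h.1.eigenvalues (Fin.rev ⟨i - 1, h.2⟩))
  else 0

/-- The Frobenius norm of a real matrix. -/
noncomputable def frobNorm {m n : ℕ} (C : Matrix (Fin m) (Fin n) ℝ) : ℝ :=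
  Real.sqrt (∑ i, ∑ j, (C i j) ^ 2)

/-- `ŝ_j = λ̂_j / (1 + λ̂_j)`. -/
noncomputable def sHat (lam : ℕ → ℝ) (j : ℕ) : ℝ := lam j / (1 + lam j)

/-- First-round ridge ratio `ŝ*_j = (ŝ_j² + c₁)/(ŝ_{j+1}² + c₁) − 1`. -/
noncomputable def sStar (lam : ℕ → ℝ) (c1 : ℝ) (j : ℕ) : ℝ :=
  ((sHat lam j) ^ 2 + c1) / ((sHat lam (j + 1)) ^ 2 + c1) - 1

/-- Second-round ridge ratio `r_j = (ŝ*_{j+1} + c₂)/(ŝ*_j + c₂)`. -/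
noncomputable def rRatio (lam : ℕ → ℝ) (c1 c2 : ℝ) (j : ℕ) : ℝ :=
  (sStar lam c1 (j + 1) + c2) / (sStar lam c1 j + c2)

section AuxW
open Matrix Finset
variable {p : ℕ}


/-- quadratic form -/
noncomputable def quadF (A : Matrix (Fin p) (Fin p) ℝ) (x : Fin p → ℝ) : ℝ := x ⬝ᵥ (A *ᵥ x)

lemma inner_eq_dot (x y : EuclideanSpace ℝ (Fin p)) : @inner ℝ _ _ x y = (x : Fin p → ℝ) ⬝ᵥ y := by
  simp [PiLp.inner_apply, RCLike.inner_apply, dotProduct, mul_comm]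

lemma parseval {A : Matrix (Fin p) (Fin p) ℝ} (hA : A.IsHermitian) (x y : EuclideanSpace ℝ (Fin p)) :
    @inner ℝ _ _ x y = ∑ i, hA.eigenvectorBasis.repr x i * hA.eigenvectorBasis.repr y i := by
  rw [← OrthonormalBasis.sum_inner_mul_inner hA.eigenvectorBasis x y]
  congr 1; ext i
  rw [hA.eigenvectorBasis.repr_apply_apply, hA.eigenvectorBasis.repr_apply_apply, real_inner_comm x]

lemma repr_mulVec {A : Matrix (Fin p) (Fin p) ℝ} (hA : A.IsHermitian) (x : EuclideanSpace ℝ (Fin p)) (i : Fin p) :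
    hA.eigenvectorBasis.repr (WithLp.toLp 2 (A *ᵥ x)) i
      = hA.eigenvalues i * hA.eigenvectorBasis.repr x i := by
  rw [hA.eigenvectorBasis.repr_apply_apply, hA.eigenvectorBasis.repr_apply_apply,
    inner_eq_dot, inner_eq_dot, WithLp.ofLp_toLp, dotProduct_mulVec, ← mulVec_transpose]
  have ht : Aᵀ = A := by
    have := hA.eq
    rwa [conjTranspose_eq_transpose_of_trivial] at this
  have h2 : A *ᵥ (hA.eigenvectorBasis i : Fin p → ℝ) = hA.eigenvalues i • (hA.eigenvectorBasis i : Fin p → ℝ) := hA.mulVec_eigenvectorBasis i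
  rw [ht, h2, smul_dotProduct, smul_eq_mul]

lemma quad_repr {A : Matrix (Fin p) (Fin p) ℝ} (hA : A.IsHermitian) (x : EuclideanSpace ℝ (Fin p)) :
    quadF A x = ∑ i, hA.eigenvalues i * (hA.eigenvectorBasis.repr x i) ^ 2 := by
  rw [quadF, show x.ofLp ⬝ᵥ (A *ᵥ x.ofLp) = @inner ℝ _ _ x (WithLp.toLp 2 (A *ᵥ x)) from (inner_eq_dot x (WithLp.toLp 2 (A *ᵥ x))).symm, parseval hA]
  congr 1; ext i; rw [repr_mulVec hA]; ring

lemma normsq_repr {A : Matrix (Fin p) (Fin p) ℝ} (hA : A.IsHermitian) (x : EuclideanSpace ℝ (Fin p)) :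
    ∑ i, (x : Fin p → ℝ) i ^ 2 = ∑ i, (hA.eigenvectorBasis.repr x i) ^ 2 := by
  have h := parseval hA x x
  rw [inner_eq_dot] at h
  simp only [dotProduct, ← sq] at h
  simpa [sq] using h

-- coefficient vanishing off the span's index set
lemma repr_zero_of_span {A : Matrix (Fin p) (Fin p) ℝ} (hA : A.IsHermitian)
    (s : Finset (Fin p)) (x : EuclideanSpace ℝ (Fin p))
    (hx : x ∈ Submodule.span ℝ (hA.eigenvectorBasis '' (s : Set (Fin p))))
    (j : Fin p) (hj : j ∉ s) : hA.eigenvectorBasis.repr x j = 0 := by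
  rw [hA.eigenvectorBasis.repr_apply_apply]
  have : Submodule.span ℝ (hA.eigenvectorBasis '' (s : Set (Fin p)))
      ≤ LinearMap.ker (innerSL ℝ (hA.eigenvectorBasis j)).toLinearMap := by
    rw [Submodule.span_le]
    rintro _ ⟨i, hi, rfl⟩
    simp only [SetLike.mem_coe, LinearMap.mem_ker, ContinuousLinearMap.coe_coe, innerSL_apply_apply]
    exact hA.eigenvectorBasis.orthonormal.2 (fun h => hj (h ▸ hi))
  have := this hx
  simpa using this

-- lower bound for quadratic form on a span
lemma quad_ge_on_span {A : Matrix (Fin p) (Fin p) ℝ} (hA : A.IsHermitian)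
    (s : Finset (Fin p)) (t : ℝ) (ht : ∀ i ∈ s, t ≤ hA.eigenvalues i)
    (x : EuclideanSpace ℝ (Fin p))
    (hx : x ∈ Submodule.span ℝ (hA.eigenvectorBasis '' (s : Set (Fin p)))) :
    t * ∑ i, (x : Fin p → ℝ) i ^ 2 ≤ quadF A x := by
  rw [quad_repr hA, normsq_repr hA, Finset.mul_sum]
  apply Finset.sum_le_sum
  intro i _
  by_cases hi : i ∈ s
  · exact mul_le_mul_of_nonneg_right (ht i hi) (sq_nonneg _)
  · rw [repr_zero_of_span hA s x hx i hi]; simp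

lemma quad_le_on_span {A : Matrix (Fin p) (Fin p) ℝ} (hA : A.IsHermitian)
    (s : Finset (Fin p)) (t : ℝ) (ht : ∀ i ∈ s, hA.eigenvalues i ≤ t)
    (x : EuclideanSpace ℝ (Fin p))
    (hx : x ∈ Submodule.span ℝ (hA.eigenvectorBasis '' (s : Set (Fin p)))) :
    quadF A x ≤ t * ∑ i, (x : Fin p → ℝ) i ^ 2 := by
  rw [quad_repr hA, normsq_repr hA, Finset.mul_sum]
  apply Finset.sum_le_sum
  intro i _
  by_cases hi : i ∈ s
  · exact mul_le_mul_of_nonneg_right (ht i hi) (sq_nonneg _)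
  · rw [repr_zero_of_span hA s x hx i hi]; simp


lemma frobNorm_nonneg {m n : ℕ} (C : Matrix (Fin m) (Fin n) ℝ) : 0 ≤ frobNorm C :=
  Real.sqrt_nonneg _

lemma frobNorm_sq {m n : ℕ} (C : Matrix (Fin m) (Fin n) ℝ) :
    frobNorm C ^ 2 = ∑ i, ∑ j, (C i j) ^ 2 :=
  Real.sq_sqrt (Finset.sum_nonneg fun i _ => Finset.sum_nonneg fun j _ => sq_nonneg _)

lemma abs_quad_le_frob (E : Matrix (Fin p) (Fin p) ℝ) (x : Fin p → ℝ) :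
    |quadF E x| ≤ frobNorm E * ∑ i, x i ^ 2 := by
  have hN : (0:ℝ) ≤ ∑ i, x i ^ 2 := Finset.sum_nonneg fun i _ => sq_nonneg _
  have hF : (0:ℝ) ≤ frobNorm E := frobNorm_nonneg E
  have key : quadF E x ^ 2 ≤ (frobNorm E * ∑ i, x i ^ 2) ^ 2 := by
    have h1 : quadF E x ^ 2 ≤ (∑ i, x i ^ 2) * ∑ i, (E *ᵥ x) i ^ 2 := by
      simpa [quadF, dotProduct] using
        Finset.sum_mul_sq_le_sq_mul_sq Finset.univ x (E *ᵥ x)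
    have h2 : ∑ i, (E *ᵥ x) i ^ 2 ≤ (∑ i, ∑ j, E i j ^ 2) * ∑ j, x j ^ 2 := by
      rw [Finset.sum_mul]
      apply Finset.sum_le_sum
      intro i _
      simpa [Matrix.mulVec, dotProduct] using
        Finset.sum_mul_sq_le_sq_mul_sq Finset.univ (fun j => E i j) x
    calc quadF E x ^ 2 ≤ (∑ i, x i ^ 2) * ∑ i, (E *ᵥ x) i ^ 2 := h1
      _ ≤ (∑ i, x i ^ 2) * ((∑ i, ∑ j, E i j ^ 2) * ∑ j, x j ^ 2) :=
          mul_le_mul_of_nonneg_left h2 hN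
      _ = (frobNorm E * ∑ i, x i ^ 2) ^ 2 := by rw [mul_pow, frobNorm_sq]; ring
  nlinarith [abs_nonneg (quadF E x), sq_abs (quadF E x), mul_nonneg hF hN]

lemma finrank_span_basis_image (b : OrthonormalBasis (Fin p) ℝ (EuclideanSpace ℝ (Fin p)))
    (s : Finset (Fin p)) :
    Module.finrank ℝ (Submodule.span ℝ (b '' (s : Set (Fin p)))) = s.card := by
  have hli : LinearIndependent ℝ (fun i : (s : Set (Fin p)) => b i) :=
    (b.orthonormal.comp Subtype.val Subtype.val_injective).linearIndependent
  have hr : Set.range (fun i : (s : Set (Fin p)) => b i) = b '' (s : Set (Fin p)) := by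
    ext y; simp
  rw [← hr, finrank_span_eq_card hli]; simp

lemma exists_ne_zero_mem_both (bA bB : OrthonormalBasis (Fin p) ℝ (EuclideanSpace ℝ (Fin p)))
    (s t : Finset (Fin p)) (hcard : p < s.card + t.card) :
    ∃ x : EuclideanSpace ℝ (Fin p), x ≠ 0 ∧
      x ∈ Submodule.span ℝ (bA '' (s : Set (Fin p))) ∧
      x ∈ Submodule.span ℝ (bB '' (t : Set (Fin p))) := by
  set U := Submodule.span ℝ (bA '' (s : Set (Fin p)))
  set V := Submodule.span ℝ (bB '' (t : Set (Fin p)))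
  have hU : Module.finrank ℝ U = s.card := finrank_span_basis_image bA s
  have hV : Module.finrank ℝ V = t.card := finrank_span_basis_image bB t
  have hsum := Submodule.finrank_sup_add_finrank_inf_eq U V
  have hle : Module.finrank ℝ ↥(U ⊔ V) ≤ p := by
    have := Submodule.finrank_le (U ⊔ V)
    rwa [finrank_euclideanSpace, Fintype.card_fin] at this
  have hpos : 0 < Module.finrank ℝ ↥(U ⊓ V) := by omega
  obtain ⟨x, hx, hx0⟩ := (U ⊓ V).exists_mem_ne_zero_of_ne_bot (by
    intro h
    rw [h, finrank_bot] at hpos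
    exact lt_irrefl 0 hpos)
  exact ⟨x, hx0, hx.1, hx.2⟩


lemma sum_sq_pos_of_ne_zero {x : Fin p → ℝ} (hx : x ≠ 0) : 0 < ∑ i, x i ^ 2 := by
  rcases Function.ne_iff.1 hx with ⟨i, hi⟩
  exact Finset.sum_pos' (fun j _ => sq_nonneg _)
    ⟨i, Finset.mem_univ i, pow_two_pos_of_ne_zero hi⟩

lemma weyl_sorted {A B : Matrix (Fin p) (Fin p) ℝ} (hA : A.IsHermitian) (hB : B.IsHermitian)
    (k : Fin p) :
    hA.eigenvalues (Tuple.sort hA.eigenvalues k) - hB.eigenvalues (Tuple.sort hB.eigenvalues k)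
      ≤ frobNorm (A - B) := by
  set σA := Tuple.sort hA.eigenvalues
  set σB := Tuple.sort hB.eigenvalues
  set s := Finset.image σA (Finset.Ici k) with hs
  set t := Finset.image σB (Finset.Iic k) with hts
  have hcard : p < s.card + t.card := by
    rw [hs, hts, Finset.card_image_of_injective _ σA.injective,
      Finset.card_image_of_injective _ σB.injective, Fin.card_Ici, Fin.card_Iic]
    have := k.isLt
    omega
  obtain ⟨x, hx0, hxA, hxB⟩ :=
    exists_ne_zero_mem_both hA.eigenvectorBasis hB.eigenvectorBasis s t hcard
  have hNpos : 0 < ∑ i, (x : Fin p → ℝ) i ^ 2 := sum_sq_pos_of_ne_zero (fun h => hx0 ((WithLp.ofLp_eq_zero 2).1 h))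
  have hlow : hA.eigenvalues (σA k) * ∑ i, (x : Fin p → ℝ) i ^ 2 ≤ quadF A x := by
    apply quad_ge_on_span hA s _ _ x hxA
    intro i hi
    rw [hs] at hi
    obtain ⟨k', hk', rfl⟩ := Finset.mem_image.1 hi
    exact Tuple.monotone_sort hA.eigenvalues (Finset.mem_Ici.1 hk')
  have hhigh : quadF B x ≤ hB.eigenvalues (σB k) * ∑ i, (x : Fin p → ℝ) i ^ 2 := by
    apply quad_le_on_span hB t _ _ x hxB
    intro i hi
    rw [hts] at hi
    obtain ⟨k', hk', rfl⟩ := Finset.mem_image.1 hi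
    exact Tuple.monotone_sort hB.eigenvalues (Finset.mem_Iic.1 hk')
  have hsub : quadF A x - quadF B x = quadF (A - B) x := by
    simp [quadF, Matrix.sub_mulVec, dotProduct_sub]
  have hfro : quadF (A - B) x ≤ frobNorm (A - B) * ∑ i, (x : Fin p → ℝ) i ^ 2 :=
    le_trans (le_abs_self _) (abs_quad_le_frob (A - B) x)
  have h1 : (hA.eigenvalues (σA k) - hB.eigenvalues (σB k)) * (∑ i, (x : Fin p → ℝ) i ^ 2)
      ≤ frobNorm (A - B) * ∑ i, (x : Fin p → ℝ) i ^ 2 := by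
    rw [sub_mul]; linarith
  exact le_of_mul_le_mul_right h1 hNpos

lemma frobNorm_sub_comm (A B : Matrix (Fin p) (Fin p) ℝ) :
    frobNorm (A - B) = frobNorm (B - A) := by
  unfold frobNorm
  congr 1
  apply Finset.sum_congr rfl; intro i _
  apply Finset.sum_congr rfl; intro j _
  simp [Matrix.sub_apply]; ring

lemma weyl_eigDesc {A B : Matrix (Fin p) (Fin p) ℝ} (hA : A.IsHermitian) (hB : B.IsHermitian)
    (i : ℕ) (hi : i - 1 < p) :
    |eigDesc A i - eigDesc B i| ≤ frobNorm (A - B) := by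
  rw [eigDesc, eigDesc, dif_pos ⟨hA, hi⟩, dif_pos ⟨hB, hi⟩]
  rw [abs_sub_le_iff]
  constructor
  · exact weyl_sorted hA hB _
  · rw [frobNorm_sub_comm]
    exact weyl_sorted hB hA _

lemma eigDesc_antitone {A : Matrix (Fin p) (Fin p) ℝ} (hA : A.IsHermitian)
    {i j : ℕ} (hij : i ≤ j) (hi1 : 1 ≤ i) (hj : j ≤ p) :
    eigDesc A j ≤ eigDesc A i := by
  have hi' : i - 1 < p := by omega
  have hj' : j - 1 < p := by omega
  rw [eigDesc, eigDesc, dif_pos ⟨hA, hj'⟩, dif_pos ⟨hA, hi'⟩]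
  apply Tuple.monotone_sort hA.eigenvalues
  rw [Fin.le_def]
  simp only [Fin.val_rev]
  omega




lemma sStar_eq (lam : ℕ → ℝ) {c1 : ℝ} (hc1 : 0 < c1) (j : ℕ) :
    sStar lam c1 j = ((sHat lam j) ^ 2 - (sHat lam (j + 1)) ^ 2)
      / ((sHat lam (j + 1)) ^ 2 + c1) := by
  have hden : ((sHat lam (j + 1)) ^ 2 + c1) ≠ 0 := by positivity
  rw [sStar, div_sub_one hden]
  ring_nf

set_option maxHeartbeats 2000000 in
lemma det_core (p q₁ : ℕ) (hq₁ : 1 ≤ q₁) (hpq : q₁ + 2 ≤ p)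
    (μ lam : ℕ → ℝ) (a : ℝ) (ha : 0 < a)
    (hμ : ∀ j, 1 ≤ j → j ≤ q₁ → a ≤ μ j)
    (hμ0 : ∀ j, q₁ < j → j ≤ p → μ j = 0)
    (Δ : ℝ) (hΔpos : 0 < Δ)
    (hΔ : ∀ j, 1 ≤ j → j ≤ p → |lam j - μ j| ≤ Δ)
    (c1 c2 : ℝ) (hc1 : 0 < c1) (hc2 : 0 < c2)
    (τ : ℝ) (hτ0 : 0 < τ) (hτ1 : τ < 1)
    (hB1 : Δ ≤ 1/2) (hB2 : Δ ≤ a/2)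
    (hB3 : 4*Δ^2 ≤ ((a/2)/(1+a/2))^2/2)
    (hC : 8*Δ^2/c1 ≤ min 1 ((1-τ)/(2*(1+τ))) * c2)
    (hD : c2 * (4*Δ^2 + c1) ≤ τ * ((a/2)/(1+a/2))^2/4) :
    {j | 1 ≤ j ∧ j ≤ p - 2 ∧ rRatio lam c1 c2 j ≤ τ}.Nonempty ∧
      sSup {j | 1 ≤ j ∧ j ≤ p - 2 ∧ rRatio lam c1 c2 j ≤ τ} = q₁ := by
  set b : ℝ := (a/2)/(1+a/2) with hbdef
  have hb : 0 < b := by positivity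
  set e : ℝ := 8*Δ^2/c1 with hedef
  have he : 0 < e := by positivity
  set θ : ℝ := min 1 ((1-τ)/(2*(1+τ))) with hθdef
  have hθ1 : θ ≤ 1 := min_le_left _ _
  have hθ2 : θ ≤ (1-τ)/(2*(1+τ)) := min_le_right _ _
  -- sHat lower bound on [1,q₁]
  have h_low : ∀ j, 1 ≤ j → j ≤ q₁ → b ≤ sHat lam j := by
    intro j h1 h2
    have hj : |lam j - μ j| ≤ Δ := hΔ j h1 (by omega)
    have hμj : a ≤ μ j := hμ j h1 h2
    have hl : a/2 ≤ lam j := by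
      have := abs_le.1 hj
      linarith [this.1]
    rw [sHat, hbdef]
    rw [div_le_div_iff₀ (by positivity) (by linarith)]
    nlinarith
  -- sHat square small on (q₁,p]
  have h_small : ∀ j, q₁ < j → j ≤ p → (sHat lam j)^2 ≤ 4*Δ^2 := by
    intro j h1 h2
    have hj : |lam j - μ j| ≤ Δ := hΔ j (by omega) h2
    rw [hμ0 j h1 h2, sub_zero] at hj
    have h1l : (1:ℝ)/2 ≤ 1 + lam j := by
      have := abs_le.1 hj
      linarith [this.1]
    have habs : |sHat lam j| ≤ 2*Δ := by
      rw [sHat, abs_div]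
      rw [abs_of_pos (by linarith : (0:ℝ) < 1 + lam j)]
      rw [div_le_iff₀ (by linarith)]
      nlinarith
    calc (sHat lam j)^2 = |sHat lam j|^2 := (sq_abs _).symm
      _ ≤ (2*Δ)^2 := by nlinarith [abs_nonneg (sHat lam j)]
      _ = 4*Δ^2 := by ring
  -- sStar small on [q₁+1, p-1]
  have hstar_small : ∀ j, q₁ + 1 ≤ j → j + 1 ≤ p → |sStar lam c1 j| ≤ e := by
    intro j h1 h2
    rw [sStar_eq lam hc1]
    have hx : (sHat lam j)^2 ≤ 4*Δ^2 := h_small j (by omega) (by omega)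
    have hy : (sHat lam (j+1))^2 ≤ 4*Δ^2 := h_small (j+1) (by omega) (by omega)
    have hnum : |(sHat lam j)^2 - (sHat lam (j+1))^2| ≤ 8*Δ^2 := by
      rw [abs_le]
      constructor <;> nlinarith [sq_nonneg (sHat lam j), sq_nonneg (sHat lam (j+1))]
    have hden : c1 ≤ (sHat lam (j+1))^2 + c1 := by nlinarith [sq_nonneg (sHat lam (j+1))]
    rw [abs_div, abs_of_pos (by nlinarith [sq_nonneg (sHat lam (j+1))] : (0:ℝ) < (sHat lam (j+1))^2 + c1)]
    rw [hedef]
    exact div_le_div₀ (by positivity) hnum hc1 hden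
  -- sStar at q₁ large
  have hstar_big : (b^2/2)/(4*Δ^2 + c1) ≤ sStar lam c1 q₁ := by
    rw [sStar_eq lam hc1]
    have hx : b^2 ≤ (sHat lam q₁)^2 := by
      have := h_low q₁ hq₁ le_rfl
      nlinarith
    have hy : (sHat lam (q₁+1))^2 ≤ 4*Δ^2 := h_small (q₁+1) (by omega) (by omega)
    apply div_le_div₀ (by nlinarith) (by nlinarith) (by positivity)
    nlinarith [sq_nonneg (sHat lam (q₁+1))]
  -- r at q₁ small
  have hr_q : rRatio lam c1 c2 q₁ ≤ τ := by
    rw [rRatio]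
    have hd0 : (0:ℝ) < (b^2/2)/(4*Δ^2 + c1) := by positivity
    have hden : (b^2/2)/(4*Δ^2 + c1) ≤ sStar lam c1 q₁ + c2 := by linarith
    have hnum : sStar lam c1 (q₁+1) + c2 ≤ 2*c2 := by
      have := (abs_le.1 (hstar_small (q₁+1) (by omega) (by omega))).2
      have heθ : e ≤ θ * c2 := hC
      nlinarith
    rw [div_le_iff₀ (by linarith)]
    have h2 : 2*c2 ≤ τ * ((b^2/2)/(4*Δ^2 + c1)) := by
      rw [div_div, ← mul_div_assoc, le_div_iff₀ (by positivity)]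
      nlinarith
    calc sStar lam c1 (q₁+1) + c2 ≤ 2*c2 := hnum
      _ ≤ τ * ((b^2/2)/(4*Δ^2 + c1)) := h2
      _ ≤ τ * (sStar lam c1 q₁ + c2) := by nlinarith
  -- r above τ beyond q₁
  have hr_big : ∀ j, q₁ + 1 ≤ j → j ≤ p - 2 → τ < rRatio lam c1 c2 j := by
    intro j h1 h2
    have hsj : |sStar lam c1 j| ≤ e := hstar_small j h1 (by omega)
    have hsj1 : |sStar lam c1 (j+1)| ≤ e := hstar_small (j+1) (by omega) (by omega)
    have heτ : e * (1+τ) ≤ c2 * (1-τ) / 2 := by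
      have : e ≤ ((1-τ)/(2*(1+τ))) * c2 := le_trans hC (by nlinarith)
      rw [div_mul_eq_mul_div, le_div_iff₀ (by linarith)] at this
      linarith
    have hec : e < c2 := by nlinarith
    have hden0 : 0 < sStar lam c1 j + c2 := by
      have := (abs_le.1 hsj).1
      linarith
    rw [rRatio, lt_div_iff₀ hden0]
    have h3 := (abs_le.1 hsj).2
    have h4 := (abs_le.1 hsj1).1
    nlinarith
  -- assemble
  have hq_mem : q₁ ∈ {j | 1 ≤ j ∧ j ≤ p - 2 ∧ rRatio lam c1 c2 j ≤ τ} :=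
    ⟨hq₁, by omega, hr_q⟩
  have hbound : ∀ j ∈ {j | 1 ≤ j ∧ j ≤ p - 2 ∧ rRatio lam c1 c2 j ≤ τ}, j ≤ q₁ := by
    rintro j ⟨hj1, hj2, hj3⟩
    by_contra h
    exact absurd hj3 (not_le.2 (hr_big j (by omega) hj2))
  refine ⟨⟨q₁, hq_mem⟩, le_antisymm (csSup_le ⟨q₁, hq_mem⟩ hbound) (le_csSup ⟨q₁, hbound⟩ hq_mem)⟩

lemma sqrt_tendsto_atTop' : Filter.Tendsto Real.sqrt Filter.atTop Filter.atTop := by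
  rw [Filter.tendsto_atTop_atTop]
  intro bb
  refine ⟨bb^2, fun x hx => ?_⟩
  nlinarith [Real.sq_sqrt (le_trans (sq_nonneg bb) hx), Real.sqrt_nonneg x]

lemma prob_lower {Ω : Type*} [MeasurableSpace Ω] (P : Measure Ω) [IsProbabilityMeasure P]
    (T Bd : Set Ω) (h : Tᶜ ⊆ Bd) (ε : ℝ≥0∞) (hB : P Bd ≤ ε) : 1 - ε ≤ P T := by
  rw [tsub_le_iff_right]
  calc (1:ℝ≥0∞) = P Set.univ := measure_univ.symm
    _ = P (T ∪ Tᶜ) := by rw [Set.union_compl_self]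
    _ ≤ P T + P Tᶜ := measure_union_le _ _
    _ ≤ P T + ε := add_le_add le_rfl (le_trans (measure_mono h) hB)


end AuxW

set_option maxHeartbeats 2000000 in
/-- Consistency of the TDRR estimate under local alternatives drifting at rate
`C_n ≤ K₀·n^{−1/2}`: if the random symmetric matrices `M n` converge to the rank-`q₁`
positive semidefinite matrix `M` at rate `O_p(max{C_n, n^{−1/2}})` in Frobenius norm,
`c₁(n) → 0`, `c₂(n) → 0`, `n·c₁(n)·c₂(n) → ∞`, and `τ ∈ (0,1)`, then with probability
tending to one the TDRR set `S_n = {j ∈ {1, ..., p − 2} : r_j(n) ≤ τ}` is nonempty with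
maximum `q₁`. -/
theorem tdrr_consistent_fast_local_drift (Ω : Type*) [MeasurableSpace Ω]
    (P : Measure Ω) [IsProbabilityMeasure P]
    (p q₁ : ℕ) (hq₁ : 1 ≤ q₁) (hpq : q₁ + 2 ≤ p)
    (M : Matrix (Fin p) (Fin p) ℝ) (hM : M.PosSemidef)
    (heigpos : 0 < eigDesc M q₁) (heigzero : ∀ j, q₁ < j → j ≤ p → eigDesc M j = 0)
    (Cn : ℕ → ℝ) (hCnn : ∀ n, 0 ≤ Cn n)
    (K₀ : ℝ) (hCn : ∀ n : ℕ, 1 ≤ n → Cn n ≤ K₀ / Real.sqrt n)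
    (Mn : ℕ → Ω → Matrix (Fin p) (Fin p) ℝ)
    (hmeas : ∀ n i j, Measurable (fun ω => Mn n ω i j))
    (hherm : ∀ n ω, (Mn n ω).IsHermitian)
    (hOp : ∀ ε : ℝ≥0∞, 0 < ε → ∃ C : ℝ, 0 < C ∧ ∀ n : ℕ, 1 ≤ n →
      P {ω | C * max (Cn n) (1 / Real.sqrt n) < frobNorm (Mn n ω - M)} ≤ ε)
    (c1 c2 : ℕ → ℝ) (hc1pos : ∀ n, 0 < c1 n) (hc2pos : ∀ n, 0 < c2 n)
    (hc1 : Tendsto c1 atTop (nhds 0)) (hc2 : Tendsto c2 atTop (nhds 0))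
    (hncc : Tendsto (fun n : ℕ => (n : ℝ) * c1 n * c2 n) atTop atTop)
    (τ : ℝ) (hτ0 : 0 < τ) (hτ1 : τ < 1) :
    Tendsto (fun n => P {ω |
        {j | 1 ≤ j ∧ j ≤ p - 2 ∧
          rRatio (fun i => eigDesc (Mn n ω) i) (c1 n) (c2 n) j ≤ τ}.Nonempty ∧
        sSup {j | 1 ≤ j ∧ j ≤ p - 2 ∧
          rRatio (fun i => eigDesc (Mn n ω) i) (c1 n) (c2 n) j ≤ τ} = q₁})
      atTop (nhds 1) := by
  have hMH : M.IsHermitian := hM.isHermitian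
  set a : ℝ := eigDesc M q₁ with hadef
  have ha : 0 < a := heigpos
  set b : ℝ := (a/2)/(1+a/2) with hbdef
  have hb : 0 < b := by positivity
  set θ : ℝ := min 1 ((1-τ)/(2*(1+τ))) with hθdef
  have hθpos : 0 < θ := lt_min one_pos (div_pos (by linarith) (by linarith))
  rw [ENNReal.tendsto_nhds ENNReal.one_ne_top]
  intro ε hε
  obtain ⟨C, hCpos, hCP⟩ := hOp ε hε
  set K : ℝ := max K₀ 1 with hKdef
  have hK1 : (1:ℝ) ≤ K := le_max_right _ _
  set C' : ℝ := C * K with hC'def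
  have hC'pos : 0 < C' := mul_pos hCpos (lt_of_lt_of_le one_pos hK1)
  set Δ : ℕ → ℝ := fun n => C' / Real.sqrt n with hΔdef
  have hΔtend : Tendsto Δ atTop (nhds 0) :=
    Tendsto.div_atTop tendsto_const_nhds (sqrt_tendsto_atTop'.comp tendsto_natCast_atTop_atTop)
  have E1 : ∀ᶠ n : ℕ in atTop, Δ n < 1/2 := hΔtend.eventually_lt_const (by norm_num)
  have E2 : ∀ᶠ n : ℕ in atTop, Δ n < a/2 := hΔtend.eventually_lt_const (by linarith)
  have E3 : ∀ᶠ n : ℕ in atTop, Δ n < b/4 := hΔtend.eventually_lt_const (by linarith)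
  have E4 : ∀ᶠ n : ℕ in atTop, 8*C'^2/θ ≤ (n:ℝ) * c1 n * c2 n :=
    hncc.eventually_ge_atTop _
  have E5 : ∀ᶠ n : ℕ in atTop, c2 n * (4*C'^2 + c1 n) < τ*b^2/4 := by
    have ht : Tendsto (fun n => c2 n * (4*C'^2 + c1 n)) atTop (nhds 0) := by
      have := Tendsto.mul hc2 ((tendsto_const_nhds (x := (4*C'^2 : ℝ))).add hc1)
      simpa using this
    exact ht.eventually_lt_const (by nlinarith [mul_pos hτ0 (pow_pos hb 2)])
  have E6 : ∀ᶠ n : ℕ in atTop, 1 ≤ n := eventually_ge_atTop 1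
  filter_upwards [E1, E2, E3, E4, E5, E6] with n h1 h2 h3 h4 h5 h6
  have hnpos : (0:ℝ) < n := by exact_mod_cast h6
  have hsq : (0:ℝ) < Real.sqrt n := Real.sqrt_pos.2 hnpos
  have hΔn : Δ n = C' / Real.sqrt n := rfl
  have hΔpos : 0 < Δ n := by rw [hΔn]; positivity
  have hΔsq : (Δ n)^2 = C'^2 / n := by
    rw [hΔn, div_pow, Real.sq_sqrt hnpos.le]
  refine Set.mem_Icc.mpr ⟨prob_lower P _ _ ?_ ε (hCP n h6), le_trans prob_le_one le_self_add⟩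
  intro ω hω
  by_contra hB'
  apply hω
  have hδ : frobNorm (Mn n ω - M) ≤ C * max (Cn n) (1 / Real.sqrt n) := not_lt.1 hB'
  have hK₀K : K₀ ≤ K := le_max_left _ _
  have hmaxle : max (Cn n) (1 / Real.sqrt n) ≤ K / Real.sqrt n := by
    apply max_le
    · exact le_trans (hCn n h6) (by gcongr)
    · gcongr
  have hδΔ : frobNorm (Mn n ω - M) ≤ Δ n := by
    rw [hΔn, hC'def, mul_div_assoc]
    exact le_trans hδ (mul_le_mul_of_nonneg_left hmaxle hCpos.le)
  -- eigenvalue hypotheses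
  have hμ : ∀ j, 1 ≤ j → j ≤ q₁ → a ≤ eigDesc M j :=
    fun j hj1 hj2 => eigDesc_antitone hMH hj2 hj1 (by omega)
  have hΔω : ∀ j, 1 ≤ j → j ≤ p →
      |(fun i => eigDesc (Mn n ω) i) j - eigDesc M j| ≤ Δ n := by
    intro j hj1 hj2
    exact le_trans (weyl_eigDesc (hherm n ω) hMH j (by omega)) hδΔ
  -- numeric side conditions
  have hB3' : 4*(Δ n)^2 ≤ ((a/2)/(1+a/2))^2/2 := by
    rw [← hbdef]
    nlinarith [h3, hΔpos, hb]
  have h4' : 8*C'^2 ≤ (n:ℝ)*c1 n*c2 n*θ := (div_le_iff₀ hθpos).1 h4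
  have hC' : 8*(Δ n)^2/(c1 n) ≤ min 1 ((1-τ)/(2*(1+τ))) * c2 n := by
    rw [← hθdef, hΔsq, show 8*(C'^2/(n:ℝ)) = 8*C'^2/(n:ℝ) from by ring, div_div,
      div_le_iff₀ (mul_pos hnpos (hc1pos n))]
    nlinarith [h4']
  have hD' : c2 n * (4*(Δ n)^2 + c1 n) ≤ τ*((a/2)/(1+a/2))^2/4 := by
    rw [← hbdef, hΔsq]
    have hd : C'^2/(n:ℝ) ≤ C'^2 := div_le_self (sq_nonneg _) (by exact_mod_cast h6)
    calc c2 n * (4*(C'^2/(n:ℝ)) + c1 n) ≤ c2 n * (4*C'^2 + c1 n) :=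
          mul_le_mul_of_nonneg_left (by linarith) (hc2pos n).le
      _ ≤ τ*b^2/4 := h5.le
  exact det_core p q₁ hq₁ hpq (fun j => eigDesc M j) (fun i => eigDesc (Mn n ω) i) a ha
    hμ heigzero (Δ n) hΔpos hΔω (c1 n) (c2 n) (hc1pos n) (hc2pos n) τ hτ0 hτ1
    h1.le h2.le hB3' hC' hD'
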